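/- Let (S_k) be a random walk with i.i.d. steps satisfying the maximal inequality P(max_{k ≤ n} S_k ≥ x) ≤ C n V(x)/x² for all n, x > 0, where V is regularly varying with index 2−α, α ∈ (1,2], and satisfies the Potter bound with exponent 2−α+γ, γ < α−1. Then for any a > 0, N ≥ 1, x > 0: P(sup_{k ≥ N} (S_k − ka) ≥ 0) ≤ C' (1/a) V(aN)/(aN), for a constant C' independent of a, N. -/

import Mathlib

open MeasureTheory ProbabilityTheory Filter Topology Set

/-- tail maximal bound for the drifted walk. If the random walk satisfies
the maximal inequality `P(max_{k ≤ n} S_k ≥ x) ≤ C n V(x)/x²` where `V` is positive,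
regularly varying with index `2 - α`, `α ∈ (1,2]`, and satisfies the Potter bound with
exponent `2 - α + γ`, `γ < α - 1`, then `P(sup_{k ≥ N}(S_k - ka) ≥ 0) ≤ C' a⁻¹ V(aN)/(aN)`
for all `a > 0`, `N ≥ 1`, with `C'` independent of `a` and `N`. -/
theorem drifted_walk_tail_bound
    {Ω : Type*} [MeasurableSpace Ω] (P : Measure Ω) [IsProbabilityMeasure P]
    (X : ℕ → Ω → ℝ) (hXm : ∀ i, Measurable (X i))
    (hindep : iIndepFun X P)
    (hident : ∀ i, Measure.map (X i) P = Measure.map (X 0) P)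
    (S : ℕ → Ω → ℝ) (hS : ∀ k ω, S k ω = ∑ i ∈ Finset.range k, X i ω)
    (α γ C Cγ : ℝ) (hα : 1 < α ∧ α ≤ 2) (hγ : 0 < γ ∧ γ < α - 1)
    (hCpos : 0 < C) (hCγ : 0 < Cγ)
    (V : ℝ → ℝ) (hVpos : ∀ x > (0:ℝ), 0 < V x)
    (hreg : ∀ l > (0:ℝ), Tendsto (fun x : ℝ => V (l * x) / V x) atTop (𝓝 (l ^ (2 - α))))
    (hPotter : ∀ x > (0:ℝ), ∀ y, x ≤ y → V y / V x ≤ Cγ * (y / x) ^ (2 - α + γ))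
    (hmax : ∀ n : ℕ, 1 ≤ n → ∀ x > (0:ℝ),
      (P {ω | ∃ k ≤ n, x ≤ S k ω}).toReal ≤ C * n * V x / x ^ 2) :
    ∃ C' > (0:ℝ), ∀ a > (0:ℝ), ∀ N : ℕ, 1 ≤ N →
      (P {ω | ∃ k ≥ N, 0 ≤ S k ω - k * a}).toReal ≤
        C' * a⁻¹ * V (a * N) / (a * N) := by
  -- the geometric ratio
  set r : ℝ := (2:ℝ) ^ (γ + 1 - α) with hr_def
  have hr_pos : 0 < r := Real.rpow_pos_of_pos (by norm_num) _
  have hr_lt : r < 1 := by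
    apply Real.rpow_lt_one_of_one_lt_of_neg (by norm_num)
    linarith [hγ.2]
  have h1r : 0 < 1 - r := by linarith
  refine ⟨2 * C * Cγ * (1 - r)⁻¹, by positivity, ?_⟩
  intro a ha N hN
  have hN0 : (0:ℝ) < N := by exact_mod_cast Nat.lt_of_lt_of_le Nat.zero_lt_one hN
  set u : ℝ := a * N with hu_def
  have hu : 0 < u := mul_pos ha hN0
  have hVu : 0 < V u := hVpos u hu
  set K : ℝ := 2 * C * Cγ * a⁻¹ * V u / u with hK_def
  have hK_nonneg : 0 ≤ K := by positivity
  -- dyadic events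
  set A : ℕ → Set Ω := fun j => {ω | ∃ k ≤ 2 ^ (j+1) * N, (2:ℝ) ^ j * u ≤ S k ω} with hA_def
  -- inclusion in the dyadic union
  have hsub : {ω | ∃ k ≥ N, 0 ≤ S k ω - k * a} ⊆ ⋃ j, A j := by
    intro ω hω
    obtain ⟨k, hk, hSk⟩ := hω
    have hkN1 : 1 ≤ k / N := (Nat.one_le_div_iff (by omega)).mpr hk
    set j := Nat.log 2 (k / N) with hj_def
    have h1 : 2 ^ j * N ≤ k := by
      have := Nat.pow_log_le_self 2 (show k / N ≠ 0 by omega)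
      exact (Nat.le_div_iff_mul_le (by omega)).mp this
    have h2 : k ≤ 2 ^ (j+1) * N := by
      have h' : k / N < 2 ^ (j + 1) := Nat.lt_pow_succ_log_self (by norm_num : 1 < 2) (k / N)
      exact le_of_lt ((Nat.div_lt_iff_lt_mul (by omega : 0 < N)).mp h')
    refine mem_iUnion.mpr ⟨j, k, h2, ?_⟩
    have hcast : ((2:ℝ) ^ j * N) ≤ (k:ℝ) := by exact_mod_cast h1
    have hle : (2:ℝ) ^ j * u ≤ (k:ℝ) * a := by
      rw [hu_def]
      calc (2:ℝ) ^ j * (a * N) = ((2:ℝ) ^ j * N) * a := by ring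
        _ ≤ (k:ℝ) * a := mul_le_mul_of_nonneg_right hcast ha.le
    linarith [hSk]
  -- per-term bound
  have hterm : ∀ j : ℕ, (P (A j)).toReal ≤ K * r ^ j := by
    intro j
    have hp : (0:ℝ) < (2:ℝ) ^ j := by positivity
    have h1p : (1:ℝ) ≤ (2:ℝ) ^ j := one_le_pow₀ (by norm_num)
    have hx : (0:ℝ) < (2:ℝ) ^ j * u := mul_pos hp hu
    have hn1 : 1 ≤ 2 ^ (j+1) * N := Nat.one_le_iff_ne_zero.mpr (by positivity)
    have hb := hmax (2 ^ (j+1) * N) hn1 ((2:ℝ) ^ j * u) hx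
    -- Potter bound on V
    have hux : u ≤ (2:ℝ) ^ j * u := le_mul_of_one_le_left hu.le h1p
    have hPot := hPotter u hu ((2:ℝ) ^ j * u) hux
    rw [mul_div_cancel_right₀ _ hu.ne'] at hPot
    have hV : V ((2:ℝ) ^ j * u) ≤ Cγ * ((2:ℝ) ^ j) ^ (2 - α + γ) * V u := by
      rw [div_le_iff₀ hVu] at hPot
      linarith
    -- key power identity
    have key : (2:ℝ) ^ j * ((2:ℝ) ^ j) ^ (2 - α + γ) = ((2:ℝ) ^ j) ^ 2 * r ^ j := by
      rw [hr_def, ← pow_mul, ← Real.rpow_natCast (2:ℝ) j, ← Real.rpow_natCast (2:ℝ) (j*2),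
        ← Real.rpow_natCast ((2:ℝ) ^ (γ + 1 - α)) j,
        ← Real.rpow_mul (by norm_num : (0:ℝ) ≤ 2), ← Real.rpow_mul (by norm_num : (0:ℝ) ≤ 2),
        ← Real.rpow_add (by norm_num : (0:ℝ) < 2), ← Real.rpow_add (by norm_num : (0:ℝ) < 2)]
      congr 1
      push_cast
      ring
    have hq : ((2:ℝ) ^ j) ^ (2 - α + γ) = (2:ℝ) ^ j * r ^ j := by
      have h := key
      rw [sq] at h
      apply mul_left_cancel₀ hp.ne'
      rw [h]; ring
    calc (P (A j)).toReal
        ≤ C * ((2 ^ (j+1) * N : ℕ) : ℝ) * V ((2:ℝ) ^ j * u) / ((2:ℝ) ^ j * u) ^ 2 := hb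
      _ ≤ C * ((2 ^ (j+1) * N : ℕ) : ℝ) * (Cγ * ((2:ℝ) ^ j) ^ (2 - α + γ) * V u) /
            ((2:ℝ) ^ j * u) ^ 2 := by
          gcongr
      _ = K * r ^ j := by
          have hcast : ((2 ^ (j+1) * N : ℕ) : ℝ) = 2 * (2:ℝ) ^ j * N := by
            push_cast [pow_succ]
            ring
          rw [hcast, hq, hK_def, hu_def]
          have hNne : (N:ℝ) ≠ 0 := hN0.ne'
          field_simp
  -- assemble via countable subadditivity and the geometric series
  have hPA : P {ω | ∃ k ≥ N, 0 ≤ S k ω - k * a} ≤ ENNReal.ofReal (K * (1 - r)⁻¹) := by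
    calc P {ω | ∃ k ≥ N, 0 ≤ S k ω - k * a} ≤ P (⋃ j, A j) := measure_mono hsub
      _ ≤ ∑' j, P (A j) := measure_iUnion_le _
      _ ≤ ∑' j, ENNReal.ofReal (K * r ^ j) := by
          apply ENNReal.tsum_le_tsum
          intro j
          rw [← ENNReal.ofReal_toReal (measure_ne_top P (A j))]
          exact ENNReal.ofReal_le_ofReal (hterm j)
      _ = ENNReal.ofReal (∑' j, K * r ^ j) :=
          (ENNReal.ofReal_tsum_of_nonneg (fun j => by positivity)
            ((summable_geometric_of_lt_one hr_pos.le hr_lt).mul_left K)).symm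
      _ = ENNReal.ofReal (K * (1 - r)⁻¹) := by
          rw [tsum_mul_left, tsum_geometric_of_lt_one hr_pos.le hr_lt]
  have hfin := ENNReal.toReal_le_of_le_ofReal
    (mul_nonneg hK_nonneg (inv_nonneg.mpr h1r.le)) hPA
  calc (P {ω | ∃ k ≥ N, 0 ≤ S k ω - k * a}).toReal ≤ K * (1 - r)⁻¹ := hfin
    _ = 2 * C * Cγ * (1 - r)⁻¹ * a⁻¹ * V u / u := by
        rw [hK_def]; ring
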